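/- Let 0<q<1, let k,l be coprime positive integers, let H be a complex Hilbert space and let A, B be bounded operators on H with A* = A satisfying AB = q^{-2l}BA and B*B = A^k ∏_{m=1}^{l}(1 - q^{-2m}A). If λ is in the spectrum of A and λ^k ∏_{m=1}^{l}(1 - q^{-2m}λ) ≠ 0, then q^{-2l}λ is in the spectrum of A. -/

import Mathlib

section Aux

open Filter ContinuousLinearMap

variable {H : Type*} [NormedAddCommGroup H] [InnerProductSpace ℂ H] [CompleteSpace H]

local notation "⟪" x ", " y "⟫" => @inner ℂ _ _ x y

/-- approximate eigenvectors multiply -/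
lemma approx_mul (S T : H →L[ℂ] H) (s t : ℂ) (ξ : ℕ → H)
    (hS : Tendsto (fun n => S (ξ n) - s • ξ n) atTop (nhds 0))
    (hT : Tendsto (fun n => T (ξ n) - t • ξ n) atTop (nhds 0)) :
    Tendsto (fun n => (S * T) (ξ n) - (s * t) • ξ n) atTop (nhds 0) := by
  have key : ∀ n, (S * T) (ξ n) - (s * t) • ξ n
      = S (T (ξ n) - t • ξ n) + t • (S (ξ n) - s • ξ n) := by
    intro n
    simp only [ContinuousLinearMap.mul_apply, map_sub, map_smul, smul_sub, smul_smul,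
      mul_comm t s]
    abel
  simp only [key]
  have h1 : Tendsto (fun n => S (T (ξ n) - t • ξ n)) atTop (nhds 0) := by
    have := (S.continuous.tendsto 0).comp hT
    simpa [Function.comp_def, map_sub, map_smul] using this
  have h2 : Tendsto (fun n => t • (S (ξ n) - s • ξ n)) atTop (nhds 0) := by
    simpa using hS.const_smul t
  simpa using h1.add h2

lemma approx_pow (S : H →L[ℂ] H) (s : ℂ) (ξ : ℕ → H)
    (hS : Tendsto (fun n => S (ξ n) - s • ξ n) atTop (nhds 0)) (k : ℕ) :
    Tendsto (fun n => (S ^ k) (ξ n) - (s ^ k) • ξ n) atTop (nhds 0) := by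
  induction k with
  | zero => simpa using tendsto_const_nhds
  | succ m ih =>
      have := approx_mul (S ^ m) S (s ^ m) s ξ ih hS
      simpa [pow_succ] using this

lemma approx_list (ξ : ℕ → H) :
    ∀ L : List ((H →L[ℂ] H) × ℂ),
      (∀ p ∈ L, Tendsto (fun n => p.1 (ξ n) - p.2 • ξ n) atTop (nhds 0)) →
      Tendsto (fun n => (L.map Prod.fst).prod (ξ n) - (L.map Prod.snd).prod • ξ n)
        atTop (nhds 0)
  | [], _ => by simpa using tendsto_const_nhds
  | p :: L, h => by
      have ih := approx_list ξ L (fun r hr => h r (List.mem_cons_of_mem _ hr))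
      have hp := h p (List.mem_cons_self)
      have := approx_mul _ _ _ _ ξ hp ih
      simpa using this

lemma list_prod_eq (f : ℕ → ℂ) (l : ℕ) :
    ((List.range l).map f).prod = ∏ m ∈ Finset.range l, f m := by
  induction l with
  | zero => simp
  | succ n ih =>
      rw [List.range_succ, Finset.prod_range_succ, List.map_append, List.prod_append, ih]
      simp

/-- self-adjoint operators have approximate eigenvectors at spectrum points -/
lemma exists_approx (A : H →L[ℂ] H) (hsa : IsSelfAdjoint A) {lam : ℂ}
    (hlam : lam ∈ spectrum ℂ A) :
    ∀ ε > (0:ℝ), ∃ x : H, ‖x‖ = 1 ∧ ‖A x - lam • x‖ < ε := by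
  by_contra hcon
  push_neg at hcon
  obtain ⟨ε, hε, hb⟩ := hcon
  set T : H →L[ℂ] H := A - lam • 1 with hT
  have hTapp : ∀ x, T x = A x - lam • x := by
    intro x; simp [hT]
  have hbound : ∀ x : H, ε * ‖x‖ ≤ ‖T x‖ := by
    intro x
    rcases eq_or_ne x 0 with rfl | hx
    · simp
    · have hxpos : (0:ℝ) < ‖x‖ := norm_pos_iff.mpr hx
      have hx' : ‖((‖x‖ : ℂ)⁻¹ • x)‖ = 1 := by
        rw [norm_smul, norm_inv]
        simp [inv_mul_cancel₀ (norm_ne_zero_iff.mpr hx)]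
      have hble := hb _ hx'
      rw [hTapp]
      have heq : A ((‖x‖ : ℂ)⁻¹ • x) - lam • ((‖x‖ : ℂ)⁻¹ • x)
          = (‖x‖ : ℂ)⁻¹ • (A x - lam • x) := by
        simp [map_smul, smul_sub, smul_smul, mul_comm]
      rw [heq, norm_smul, norm_inv] at hble
      have hnn : ‖((‖x‖:ℝ):ℂ)‖ = ‖x‖ := by simp
      rw [hnn] at hble
      calc ε * ‖x‖ ≤ (‖x‖⁻¹ * ‖A x - lam • x‖) * ‖x‖ := by nlinarith
        _ = ‖A x - lam • x‖ := by field_simp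
  have hre : lam = (lam.re : ℂ) := hsa.mem_spectrum_eq_re hlam
  have hTsa : IsSelfAdjoint T := by
    rw [hT]
    refine hsa.sub ?_
    rw [IsSelfAdjoint, star_smul, star_one]
    rw [hre]
    simp
  -- antilipschitz
  have hanti : AntilipschitzWith (⟨ε, hε.le⟩ : NNReal)⁻¹ T := by
    refine T.antilipschitz_of_bound fun x => ?_
    have h := hbound x
    change ‖x‖ ≤ ε⁻¹ * ‖T x‖
    rw [← div_eq_inv_mul, le_div_iff₀ hε]
    linarith
  have hdense : (LinearMap.range (T : H →ₗ[ℂ] H)).topologicalClosure = ⊤ := by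
    have _inst := hanti.completeSpace_range_clm
    rw [Submodule.topologicalClosure_eq_top_iff, Submodule.eq_bot_iff]
    intro x hx
    have hTx : T x = 0 := by
      have h0 : ⟪T x, T x⟫ = 0 := by
        have hadj := ContinuousLinearMap.adjoint_inner_left T x (T x)
        rw [hTsa.adjoint_eq] at hadj
        rw [← hadj]
        exact hx _ ⟨T x, rfl⟩
      exact inner_self_eq_zero.mp h0
    have := hbound x
    rw [hTx, norm_zero] at this
    have : ‖x‖ = 0 := le_antisymm (by nlinarith) (norm_nonneg x)
    simpa using norm_eq_zero.mp this
  have hbij : Function.Bijective T :=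
    (ContinuousLinearMap.bijective_iff_dense_range_and_antilipschitz T).mpr
      ⟨hdense, _, hanti⟩
  have hunit : IsUnit T := ContinuousLinearMap.isUnit_iff_bijective.mpr hbij
  have : IsUnit (algebraMap ℂ (H →L[ℂ] H) lam - A) := by
    have := hunit.neg
    rw [hT, neg_sub] at this
    simpa [Algebra.algebraMap_eq_smul_one] using this
  exact (spectrum.mem_iff.mp hlam) this


end Aux

/-- If `A, B` are bounded operators on a complex Hilbert space with
`A* = A`, `AB = q^{-2l}BA`, `B*B = A^k ∏_{m=1}^{l}(1 - q^{-2m}A)`, and `λ` lies in the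
spectrum of `A` with `λ^k ∏_{m=1}^{l}(1 - q^{-2m}λ) ≠ 0`, then `q^{-2l}λ` also lies in
the spectrum of `A`. -/
theorem spectrum_shift
    (q : ℝ) (hq0 : 0 < q) (hq1 : q < 1)
    (k l : ℕ) (hk : 0 < k) (hl : 0 < l) (hkl : Nat.Coprime k l)
    {H : Type*} [NormedAddCommGroup H] [InnerProductSpace ℂ H] [CompleteSpace H]
    (A B : H →L[ℂ] H) (hsa : star A = A)
    (h1 : A * B = ((q : ℂ)⁻¹ ^ (2 * l)) • (B * A))
    (h3 : star B * B =
      A ^ k * ((List.range l).map (fun m => 1 - ((q : ℂ)⁻¹ ^ (2 * (m + 1))) • A)).prod)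
    (lam : ℂ) (hlam : lam ∈ spectrum ℂ A)
    (hne : lam ^ k * ∏ m ∈ Finset.Icc 1 l, (1 - (q : ℂ)⁻¹ ^ (2 * m) * lam) ≠ 0) :
    ((q : ℂ)⁻¹ ^ (2 * l)) * lam ∈ spectrum ℂ A := by
  classical
  set μ : ℂ := (q : ℂ)⁻¹ ^ (2 * l) with hμ
  set P : ℂ := lam ^ k * ∏ m ∈ Finset.Icc 1 l, (1 - (q : ℂ)⁻¹ ^ (2 * m) * lam) with hP
  -- approximate eigenvectors for lam
  have hAsa : IsSelfAdjoint A := hsa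
  have hex := exists_approx A hAsa hlam
  have hchoice : ∀ n : ℕ, ∃ x : H, ‖x‖ = 1 ∧ ‖A x - lam • x‖ < 1 / (n + 1) := by
    intro n
    exact hex (1 / (n + 1)) (by positivity)
  choose ξ hξ1 hξ2 using hchoice
  have hA : Filter.Tendsto (fun n => A (ξ n) - lam • ξ n) Filter.atTop (nhds 0) := by
    rw [tendsto_zero_iff_norm_tendsto_zero]
    refine squeeze_zero (fun n => norm_nonneg _) (fun n => (hξ2 n).le) ?_
    exact tendsto_one_div_add_atTop_nhds_zero_nat
  -- approximate eigen-equation for B*B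
  set g : ℕ → ℂ := fun m => 1 - (q : ℂ)⁻¹ ^ (2 * (m + 1)) * lam with hg
  have hBB : Filter.Tendsto (fun n => (star B * B) (ξ n)
      - (lam ^ k * ((List.range l).map g).prod) • ξ n) Filter.atTop (nhds 0) := by
    rw [h3]
    refine approx_mul _ _ _ _ ξ (approx_pow A lam ξ hA k) ?_
    have := approx_list ξ ((List.range l).map
      (fun m => (1 - ((q : ℂ)⁻¹ ^ (2 * (m + 1))) • A, g m))) ?_
    · simpa [List.map_map, Function.comp_def] using this
    · intro p hp
      simp only [List.mem_map, List.mem_range] at hp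
      obtain ⟨m, hm, rfl⟩ := hp
      have key : ∀ n, (1 - ((q : ℂ)⁻¹ ^ (2 * (m + 1))) • A) (ξ n) - g m • ξ n
          = -(((q : ℂ)⁻¹ ^ (2 * (m + 1))) • (A (ξ n) - lam • ξ n)) := by
        intro n
        simp only [hg, ContinuousLinearMap.sub_apply, ContinuousLinearMap.smul_apply,
          ContinuousLinearMap.one_apply, sub_smul, one_smul, smul_sub, smul_smul]
        abel
      simp only [key]
      simpa using (hA.const_smul ((q : ℂ)⁻¹ ^ (2 * (m + 1)))).neg
  -- identify the scalar with P
  have hProdEq : lam ^ k * ((List.range l).map g).prod = P := by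
    rw [hP, list_prod_eq g l]
    congr 1
    rw [show Finset.Icc 1 l = Finset.Ico 1 (l + 1) by rfl, Finset.prod_Ico_eq_prod_range]
    simp only [Nat.add_sub_cancel]
    exact Finset.prod_congr rfl fun m _ => by rw [hg]; ring_nf
  rw [hProdEq] at hBB
  have hP0 : 0 < ‖P‖ := norm_pos_iff.mpr hne
  -- norm of B ξ n tends to P
  have hinner : Filter.Tendsto (fun n => ((‖B (ξ n)‖ : ℂ) ^ 2)) Filter.atTop (nhds P) := by
    have heq : ∀ n, ((‖B (ξ n)‖ : ℂ) ^ 2)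
        = @inner ℂ _ _ (ξ n) ((star B * B) (ξ n) - P • ξ n) + P := by
      intro n
      rw [inner_sub_right, inner_smul_right]
      have h1' : @inner ℂ _ _ (ξ n) ((star B * B) (ξ n)) = ((‖B (ξ n)‖ : ℂ) ^ 2) := by
        rw [ContinuousLinearMap.mul_apply, ContinuousLinearMap.star_eq_adjoint,
          ContinuousLinearMap.adjoint_inner_right]
        rw [@inner_self_eq_norm_sq_to_K ℂ]
        norm_cast
      have h2' : @inner ℂ _ _ (ξ n) (ξ n) = 1 := by
        rw [@inner_self_eq_norm_sq_to_K ℂ, hξ1 n]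
        norm_cast
      rw [h1', h2', mul_one]
      ring
    simp only [heq]
    have : Filter.Tendsto (fun n => @inner ℂ _ _ (ξ n) ((star B * B) (ξ n) - P • ξ n))
        Filter.atTop (nhds 0) := by
      rw [tendsto_zero_iff_norm_tendsto_zero]
      refine squeeze_zero (g := fun n => ‖(star B * B) (ξ n) - P • ξ n‖)
        (fun n => norm_nonneg _) (fun n => ?_) ?_
      · calc ‖@inner ℂ _ _ (ξ n) ((star B * B) (ξ n) - P • ξ n)‖
            ≤ ‖ξ n‖ * ‖(star B * B) (ξ n) - P • ξ n‖ := norm_inner_le_norm _ _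
          _ = ‖(star B * B) (ξ n) - P • ξ n‖ := by rw [hξ1 n, one_mul]
      · exact tendsto_zero_iff_norm_tendsto_zero.mp hBB
    simpa using this.add tendsto_const_nhds
  -- eventual lower bound on ‖B ξ n‖²
  have hlow : ∀ᶠ n in Filter.atTop, ‖P‖ / 2 ≤ ‖B (ξ n)‖ ^ 2 := by
    have := Metric.tendsto_atTop.mp hinner (‖P‖ / 2) (by positivity)
    obtain ⟨N, hN⟩ := this
    refine Filter.eventually_atTop.mpr ⟨N, fun n hn => ?_⟩
    have hd := hN n hn
    rw [dist_eq_norm] at hd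
    have habs : ‖((‖B (ξ n)‖ : ℂ) ^ 2)‖ = ‖B (ξ n)‖ ^ 2 := by
      rw [norm_pow]
      simp
    have htri : ‖P‖ - ‖((‖B (ξ n)‖ : ℂ) ^ 2)‖ ≤ ‖((‖B (ξ n)‖ : ℂ) ^ 2) - P‖ := by
      rw [norm_sub_rev]
      exact norm_sub_norm_le _ _
    rw [habs] at htri
    linarith
  -- now suppose μ * lam not in spectrum
  by_contra hmu
  rw [spectrum.notMem_iff] at hmu
  obtain ⟨u, hu⟩ := hmu
  set R : H →L[ℂ] H := ↑u⁻¹ with hR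
  have hRid : ∀ x : H, R ((algebraMap ℂ (H →L[ℂ] H) (μ * lam) - A) x) = x := by
    intro x
    have : R * (algebraMap ℂ (H →L[ℂ] H) (μ * lam) - A) = 1 := by
      rw [hR, ← hu]; exact u.inv_mul
    calc R ((algebraMap ℂ (H →L[ℂ] H) (μ * lam) - A) x)
        = (R * (algebraMap ℂ (H →L[ℂ] H) (μ * lam) - A)) x := rfl
      _ = x := by rw [this]; rfl
  -- A (B ξ n) - μ lam B ξ n → 0
  have hAB : Filter.Tendsto (fun n => A (B (ξ n)) - (μ * lam) • B (ξ n))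
      Filter.atTop (nhds 0) := by
    have key : ∀ n, A (B (ξ n)) - (μ * lam) • B (ξ n)
        = μ • B (A (ξ n) - lam • ξ n) := by
      intro n
      have := congrArg (fun T : H →L[ℂ] H => T (ξ n)) h1
      simp only [ContinuousLinearMap.mul_apply, ContinuousLinearMap.smul_apply] at this
      rw [this, map_sub, map_smul, smul_sub, smul_smul]
    simp only [key]
    have := (B.continuous.tendsto 0).comp hA
    have h2 : Filter.Tendsto (fun n => B (A (ξ n) - lam • ξ n)) Filter.atTop (nhds 0) := by
      simpa [Function.comp_def] using this
    simpa using h2.const_smul μ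
  -- so ‖B ξ n‖ → 0
  have hBnorm : Filter.Tendsto (fun n => ‖B (ξ n)‖) Filter.atTop (nhds 0) := by
    refine squeeze_zero (g := fun n => ‖R‖ * ‖A (B (ξ n)) - (μ * lam) • B (ξ n)‖)
      (fun n => norm_nonneg _) (fun n => ?_) ?_
    · calc ‖B (ξ n)‖ = ‖R ((algebraMap ℂ (H →L[ℂ] H) (μ * lam) - A) (B (ξ n)))‖ := by
            rw [hRid (B (ξ n))]
        _ ≤ ‖R‖ * ‖(algebraMap ℂ (H →L[ℂ] H) (μ * lam) - A) (B (ξ n))‖ := R.le_opNorm _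
        _ = ‖R‖ * ‖A (B (ξ n)) - (μ * lam) • B (ξ n)‖ := by
            rw [show (algebraMap ℂ (H →L[ℂ] H) (μ * lam) - A) (B (ξ n))
                = (μ * lam) • B (ξ n) - A (B (ξ n)) by
              simp [Algebra.algebraMap_eq_smul_one]]
            rw [norm_sub_rev]
    · have := tendsto_zero_iff_norm_tendsto_zero.mp hAB
      simpa using this.const_mul ‖R‖
  have hsq : Filter.Tendsto (fun n => ‖B (ξ n)‖ ^ 2) Filter.atTop (nhds 0) := by
    simpa using hBnorm.pow 2
  have hsmall : ∀ᶠ n in Filter.atTop, ‖B (ξ n)‖ ^ 2 < ‖P‖ / 2 :=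
    hsq.eventually_lt_const (by positivity)
  obtain ⟨n, hn1, hn2⟩ := (hlow.and hsmall).exists
  linarith
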